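/- For every $l, k \in \mathbb{Z}$ with $1 \leq \alpha \leq 2$, one has $\big| |l|^\alpha + |k-l|^\alpha - |k|^\alpha \big| \leq 2\,|l|^{\alpha/2}|k-l|^{\alpha/2}$. -/
import Mathlib


open Real

lemma my_rpow_add_le_add_rpow {x y p : ℝ} (hx : 0 ≤ x) (hy : 0 ≤ y)
    (hp : 0 ≤ p) (hp1 : p ≤ 1) : (x + y) ^ p ≤ x ^ p + y ^ p := by
  have h := NNReal.rpow_add_le_add_rpow ⟨x, hx⟩ ⟨y, hy⟩ hp hp1
  exact_mod_cast h

theorem abs_pow_alpha_triangle (α : ℝ) (hα : 1 ≤ α) (hα2 : α ≤ 2) (l k : ℤ) :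
    |(|(l : ℝ)|) ^ α + (|((k - l : ℤ) : ℝ)|) ^ α - (|(k : ℝ)|) ^ α| ≤
      2 * (|(l : ℝ)|) ^ (α / 2) * (|((k - l : ℤ) : ℝ)|) ^ (α / 2) := by
  set a : ℝ := |(l : ℝ)| with ha
  set b : ℝ := |((k - l : ℤ) : ℝ)| with hb
  set c : ℝ := |(k : ℝ)| with hc
  have ha0 : 0 ≤ a := abs_nonneg _
  have hb0 : 0 ≤ b := abs_nonneg _
  have hc0 : 0 ≤ c := abs_nonneg _
  set p : ℝ := α / 2 with hpdef
  have hp0 : 0 ≤ p := by positivity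
  have hp1 : p ≤ 1 := by simp [hpdef]; linarith
  have hcab : c ≤ a + b := by
    have : (k : ℝ) = (l : ℝ) + ((k - l : ℤ) : ℝ) := by push_cast; ring
    rw [hc, this]; exact abs_add_le _ _
  have habc : a ≤ c + b := by
    have : (l : ℝ) = (k : ℝ) - ((k - l : ℤ) : ℝ) := by push_cast; ring
    rw [ha, this]; exact abs_sub _ _
  have hbac : b ≤ c + a := by
    have : ((k - l : ℤ) : ℝ) = (k : ℝ) - (l : ℝ) := by push_cast; ring
    rw [hb, this, ha]
    calc |(k : ℝ) - l| ≤ |(k : ℝ)| + |(l : ℝ)| := abs_sub _ _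
      _ = c + |(l : ℝ)| := rfl
  -- square identities
  have hsq : ∀ x : ℝ, 0 ≤ x → x ^ α = x ^ p * x ^ p := by
    intro x hx
    rw [← Real.rpow_add' hx (by simp [hpdef]; linarith)]
    congr 1
    rw [hpdef]; ring
  have hmono : ∀ x y : ℝ, 0 ≤ x → x ≤ y → x ^ p ≤ y ^ p :=
    fun x y hx hxy => Real.rpow_le_rpow hx hxy hp0
  set A := a ^ p
  set B := b ^ p
  set C := c ^ p
  have hA0 : 0 ≤ A := Real.rpow_nonneg ha0 _
  have hB0 : 0 ≤ B := Real.rpow_nonneg hb0 _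
  have hC0 : 0 ≤ C := Real.rpow_nonneg hc0 _
  have hCAB : C ≤ A + B :=
    (hmono c (a + b) hc0 hcab).trans (my_rpow_add_le_add_rpow ha0 hb0 hp0 hp1)
  have hACB : A ≤ C + B :=
    (hmono a (c + b) ha0 habc).trans (my_rpow_add_le_add_rpow hc0 hb0 hp0 hp1)
  have hBCA : B ≤ C + A :=
    (hmono b (c + a) hb0 hbac).trans (my_rpow_add_le_add_rpow hc0 ha0 hp0 hp1)
  rw [hsq a ha0, hsq b hb0, hsq c hc0]
  rw [abs_le]
  constructor
  · nlinarith [sq_nonneg (A + B - C), sq_nonneg (A - B)]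
  · nlinarith [sq_nonneg (A - B - C), sq_nonneg (A - B + C)]
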